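/- The extremal metric for the extremal length of a nonempty path family Γ in a finite network is unique up to a positive scalar multiple: if ρ₁ and ρ₂ are both nonzero metrics achieving λ(Γ,G) = ℓ²(ρ,Γ)/A(ρ), then ρ₂ = t·ρ₁ for some t > 0. -/

import Mathlib

open Finset

section Aux

variable {E : Type*} [Fintype E]

private lemma aux_sq_pos {a : ℝ} (h : a ≠ 0) : 0 < a ^ 2 :=
  lt_of_le_of_ne (sq_nonneg a) (Ne.symm (pow_ne_zero 2 h))

private lemma aux_Apos (c : E → ℝ) (hc : ∀ e, 0 < c e) (ρ : E → ℝ) (h0 : ρ ≠ 0) :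
    0 < ∑ e, c e * ρ e ^ 2 := by
  obtain ⟨e, he⟩ := Function.ne_iff.mp h0
  refine Finset.sum_pos' (fun i _ => mul_nonneg (hc i).le (sq_nonneg _)) ⟨e, Finset.mem_univ e, ?_⟩
  exact mul_pos (hc e) (aux_sq_pos he)

omit [Fintype E] in
private lemma aux_sum_nonneg (ρ : E → ℝ) (hρ : ∀ e, 0 ≤ ρ e) (γ : Multiset E) :
    0 ≤ (γ.map ρ).sum := by
  refine Multiset.sum_nonneg fun x hx => ?_
  obtain ⟨e, -, rfl⟩ := Multiset.mem_map.mp hx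
  exact hρ e

private lemma aux_map_count [DecidableEq E] (ρ : E → ℝ) (γ : Multiset E) :
    (γ.map ρ).sum = ∑ e, (γ.count e : ℝ) * ρ e := by
  rw [Finset.sum_multiset_map_count]
  rw [Finset.sum_subset (Finset.subset_univ γ.toFinset)]
  · exact Finset.sum_congr rfl fun e _ => by rw [nsmul_eq_mul]
  · intro e _ he
    rw [Multiset.count_eq_zero_of_notMem (by simpa using he)]
    simp

omit [Fintype E] in
private lemma aux_inf'_div (Γ : Finset (Multiset E)) (hΓ : Γ.Nonempty)
    (ρ : E → ℝ) (L : ℝ) (hL : 0 < L) :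
    (Γ.inf' hΓ fun γ => (γ.map fun e => ρ e / L).sum)
      = (Γ.inf' hΓ fun γ => (γ.map ρ).sum) / L := by
  have hmap : ∀ γ : Multiset E, ((γ.map fun e => ρ e / L).sum : ℝ) = (γ.map ρ).sum / L := by
    intro γ
    simp only [div_eq_mul_inv]
    exact Multiset.sum_map_mul_right
  simp only [hmap]
  apply le_antisymm
  · obtain ⟨γ₀, hγ₀, h⟩ := Finset.exists_mem_eq_inf' hΓ (fun γ => ((γ.map ρ).sum : ℝ))
    rw [h]
    exact Finset.inf'_le _ hγ₀
  · refine Finset.le_inf' _ _ fun γ hγ => ?_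
    gcongr
    exact Finset.inf'_le _ hγ

end Aux

theorem stmt_4 {E : Type*} [Fintype E]
    (c : E → ℝ) (hc : ∀ e, 0 < c e)
    (Γ : Finset (Multiset E)) (hΓ : Γ.Nonempty) (hne : ∀ γ ∈ Γ, γ ≠ 0)
    (ρ₁ ρ₂ : E → ℝ)
    (h₁nn : ∀ e, 0 ≤ ρ₁ e) (h₂nn : ∀ e, 0 ≤ ρ₂ e)
    (h₁0 : ρ₁ ≠ 0) (h₂0 : ρ₂ ≠ 0)
    (h₁ : (Γ.inf' hΓ fun γ => (γ.map ρ₁).sum) ^ 2 / (∑ e, c e * ρ₁ e ^ 2)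
        = sSup {q : ℝ | ∃ ρ : E → ℝ, (∀ e, 0 ≤ ρ e) ∧ ρ ≠ 0 ∧
            q = (Γ.inf' hΓ fun γ => (γ.map ρ).sum) ^ 2 / (∑ e, c e * ρ e ^ 2)})
    (h₂ : (Γ.inf' hΓ fun γ => (γ.map ρ₂).sum) ^ 2 / (∑ e, c e * ρ₂ e ^ 2)
        = sSup {q : ℝ | ∃ ρ : E → ℝ, (∀ e, 0 ≤ ρ e) ∧ ρ ≠ 0 ∧
            q = (Γ.inf' hΓ fun γ => (γ.map ρ).sum) ^ 2 / (∑ e, c e * ρ e ^ 2)}) :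
    ∃ t : ℝ, 0 < t ∧ ∀ e, ρ₂ e = t * ρ₁ e := by
  classical
  set S : Set ℝ := {q : ℝ | ∃ ρ : E → ℝ, (∀ e, 0 ≤ ρ e) ∧ ρ ≠ 0 ∧
      q = (Γ.inf' hΓ fun γ => (γ.map ρ).sum) ^ 2 / (∑ e, c e * ρ e ^ 2)} with hS
  set lam : ℝ := sSup S with hlam
  obtain ⟨γ₀, hγ₀⟩ := id hΓ
  -- ℓ is nonnegative for nonneg metrics
  have hellnn : ∀ ρ : E → ℝ, (∀ e, 0 ≤ ρ e) →
      0 ≤ (Γ.inf' hΓ fun γ => (γ.map ρ).sum) := fun ρ hρ =>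
    Finset.le_inf' _ _ fun γ _ => aux_sum_nonneg ρ hρ γ
  -- S is bounded above
  have hbdd : BddAbove S := by
    refine ⟨(∑ e, ((γ₀.count e : ℝ) / Real.sqrt (c e)) ^ 2), ?_⟩
    rintro q ⟨ρ, hρnn, hρ0, rfl⟩
    have hApos : 0 < ∑ e, c e * ρ e ^ 2 := aux_Apos c hc ρ hρ0
    rw [div_le_iff₀ hApos]
    have hL0 : (Γ.inf' hΓ fun γ => (γ.map ρ).sum) ≤ (γ₀.map ρ).sum :=
      Finset.inf'_le _ hγ₀
    have hCS : ((γ₀.map ρ).sum) ^ 2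
        ≤ (∑ e, ((γ₀.count e : ℝ) / Real.sqrt (c e)) ^ 2) * ∑ e, c e * ρ e ^ 2 := by
      have := Finset.sum_mul_sq_le_sq_mul_sq Finset.univ
        (fun e => (γ₀.count e : ℝ) / Real.sqrt (c e)) (fun e => Real.sqrt (c e) * ρ e)
      have he1 : ∀ e : E, (γ₀.count e : ℝ) / Real.sqrt (c e) * (Real.sqrt (c e) * ρ e)
          = (γ₀.count e : ℝ) * ρ e := by
        intro e
        have : Real.sqrt (c e) ≠ 0 := Real.sqrt_ne_zero'.mpr (hc e)
        field_simp
      have he2 : ∀ e : E, (Real.sqrt (c e) * ρ e) ^ 2 = c e * ρ e ^ 2 := by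
        intro e
        rw [mul_pow, Real.sq_sqrt (hc e).le]
      simp only [he1, he2] at this
      rwa [aux_map_count]
    calc (Γ.inf' hΓ fun γ => (γ.map ρ).sum) ^ 2 ≤ ((γ₀.map ρ).sum) ^ 2 := by
          apply pow_le_pow_left₀ (hellnn ρ hρnn) hL0
      _ ≤ _ := hCS
  -- E is nonempty
  have hE : Nonempty E := by
    by_contra h
    exact h₁0 (funext fun e => absurd ⟨e⟩ h)
  -- lam > 0
  have hlampos : 0 < lam := by
    have hone1 : (1 : ℝ) ≤ (Γ.inf' hΓ fun γ => (γ.map (fun _ : E => (1:ℝ))).sum) := by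
      refine Finset.le_inf' _ _ fun γ hγ => ?_
      have : (γ.map (fun _ : E => (1:ℝ))).sum = (γ.card : ℝ) := by
        simp [Multiset.map_const', Multiset.sum_replicate]
      rw [this]
      exact_mod_cast Nat.one_le_iff_ne_zero.mpr (by simpa [Multiset.card_eq_zero] using hne γ hγ)
    have honeS : ((Γ.inf' hΓ fun γ => (γ.map (fun _ : E => (1:ℝ))).sum) ^ 2
        / (∑ e, c e * (1:ℝ) ^ 2)) ∈ S := by
      refine ⟨fun _ => 1, fun _ => zero_le_one, ?_, rfl⟩
      intro h
      obtain ⟨e⟩ := hE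
      simpa using congrFun h e
    refine lt_of_lt_of_le ?_ (le_csSup hbdd honeS)
    refine div_pos (by nlinarith) ?_
    exact aux_Apos c hc _ (fun h => by obtain ⟨e⟩ := hE; simpa using congrFun h e)
  -- positivity of the basic quantities
  have hA₁ : 0 < ∑ e, c e * ρ₁ e ^ 2 := aux_Apos c hc ρ₁ h₁0
  have hA₂ : 0 < ∑ e, c e * ρ₂ e ^ 2 := aux_Apos c hc ρ₂ h₂0
  set L₁ : ℝ := Γ.inf' hΓ fun γ => (γ.map ρ₁).sum with hL₁def
  set L₂ : ℝ := Γ.inf' hΓ fun γ => (γ.map ρ₂).sum with hL₂def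
  have hL₁pos : 0 < L₁ := by
    rcases (hellnn ρ₁ h₁nn).lt_or_eq with h | h
    · exact h
    · exfalso
      have hL0 : L₁ = 0 := h.symm
      rw [hL0] at h₁
      simp at h₁
      linarith
  have hL₂pos : 0 < L₂ := by
    rcases (hellnn ρ₂ h₂nn).lt_or_eq with h | h
    · exact h
    · exfalso
      have hL0 : L₂ = 0 := h.symm
      rw [hL0] at h₂
      simp at h₂
      linarith
  have hsq₁ : L₁ ^ 2 = lam * ∑ e, c e * ρ₁ e ^ 2 := by
    field_simp at h₁; linarith [h₁]
  have hsq₂ : L₂ ^ 2 = lam * ∑ e, c e * ρ₂ e ^ 2 := by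
    field_simp at h₂; linarith [h₂]
  -- normalized metrics
  set a : E → ℝ := fun e => ρ₁ e / L₁ with hadef
  set b : E → ℝ := fun e => ρ₂ e / L₂ with hbdef
  have ha_ell : (Γ.inf' hΓ fun γ => (γ.map a).sum) = 1 := by
    rw [hadef]; rw [aux_inf'_div Γ hΓ ρ₁ L₁ hL₁pos]
    exact div_self hL₁pos.ne'
  have hb_ell : (Γ.inf' hΓ fun γ => (γ.map b).sum) = 1 := by
    rw [hbdef]; rw [aux_inf'_div Γ hΓ ρ₂ L₂ hL₂pos]
    exact div_self hL₂pos.ne'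
  have hAa : ∑ e, c e * a e ^ 2 = 1 / lam := by
    have : ∑ e, c e * a e ^ 2 = (∑ e, c e * ρ₁ e ^ 2) / L₁ ^ 2 := by
      rw [Finset.sum_div]
      refine Finset.sum_congr rfl fun e _ => ?_
      rw [hadef]; field_simp
    rw [this, hsq₁]
    field_simp
  have hAb : ∑ e, c e * b e ^ 2 = 1 / lam := by
    have : ∑ e, c e * b e ^ 2 = (∑ e, c e * ρ₂ e ^ 2) / L₂ ^ 2 := by
      rw [Finset.sum_div]
      refine Finset.sum_congr rfl fun e _ => ?_
      rw [hbdef]; field_simp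
    rw [this, hsq₂]
    field_simp
  -- the midpoint metric
  set σ : E → ℝ := fun e => a e + b e with hσdef
  have hσnn : ∀ e, 0 ≤ σ e := fun e =>
    add_nonneg (div_nonneg (h₁nn e) hL₁pos.le) (div_nonneg (h₂nn e) hL₂pos.le)
  have hσ0 : σ ≠ 0 := by
    obtain ⟨e, he⟩ := Function.ne_iff.mp h₁0
    intro h
    have h1 : σ e = 0 := congrFun h e
    have ha : 0 < a e := div_pos ((h₁nn e).lt_of_ne (Ne.symm he)) hL₁pos
    have hb : 0 ≤ b e := div_nonneg (h₂nn e) hL₂pos.le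
    rw [hσdef] at h1; simp only at h1; linarith
  have hAσpos : 0 < ∑ e, c e * σ e ^ 2 := aux_Apos c hc σ hσ0
  set B : ℝ := ∑ e, c e * (a e * b e) with hBdef
  have hAσ : ∑ e, c e * σ e ^ 2 = 1 / lam + 1 / lam + 2 * B := by
    have : ∀ e ∈ Finset.univ, c e * σ e ^ 2
        = c e * a e ^ 2 + c e * b e ^ 2 + 2 * (c e * (a e * b e)) := by
      intro e _; rw [hσdef]; ring
    rw [Finset.sum_congr rfl this, Finset.sum_add_distrib, Finset.sum_add_distrib,
      ← Finset.mul_sum, hAa, hAb]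
  -- σ's ratio is at most lam
  have hσmem : ((Γ.inf' hΓ fun γ => (γ.map σ).sum) ^ 2 / (∑ e, c e * σ e ^ 2)) ∈ S :=
    ⟨σ, hσnn, hσ0, rfl⟩
  have hσle : ((Γ.inf' hΓ fun γ => (γ.map σ).sum) ^ 2 / (∑ e, c e * σ e ^ 2)) ≤ lam :=
    le_csSup hbdd hσmem
  have hσell : (2 : ℝ) ≤ Γ.inf' hΓ fun γ => (γ.map σ).sum := by
    refine Finset.le_inf' _ _ fun γ hγ => ?_
    have hsplit : (γ.map σ).sum = (γ.map a).sum + (γ.map b).sum := by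
      rw [hσdef]
      rw [← Multiset.sum_map_add]
    have h1 : (1 : ℝ) ≤ (γ.map a).sum := ha_ell ▸ Finset.inf'_le _ hγ
    have h2 : (1 : ℝ) ≤ (γ.map b).sum := hb_ell ▸ Finset.inf'_le _ hγ
    rw [hsplit]; linarith
  have hkey : 1 / lam ≤ B := by
    rw [div_le_iff₀ hAσpos] at hσle
    have h4 : (4 : ℝ) ≤ (Γ.inf' hΓ fun γ => (γ.map σ).sum) ^ 2 := by nlinarith
    rw [hAσ] at hσle
    have : (4 : ℝ) ≤ lam * (1 / lam + 1 / lam + 2 * B) := le_trans h4 hσle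
    rw [mul_add, mul_add, mul_one_div, div_self hlampos.ne'] at this
    rw [div_le_iff₀ hlampos]
    nlinarith
  -- conclude a = b
  have hzero : ∑ e, c e * (a e - b e) ^ 2 ≤ 0 := by
    have : ∀ e ∈ Finset.univ, c e * (a e - b e) ^ 2
        = c e * a e ^ 2 + c e * b e ^ 2 - 2 * (c e * (a e * b e)) := by
      intro e _; ring
    rw [Finset.sum_congr rfl this]
    rw [Finset.sum_sub_distrib, Finset.sum_add_distrib, ← Finset.mul_sum, hAa, hAb]
    rw [← hBdef]
    linarith
  have hab : ∀ e, a e = b e := by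
    intro e
    have hterm : ∀ i ∈ Finset.univ, (0:ℝ) ≤ c i * (a i - b i) ^ 2 :=
      fun i _ => mul_nonneg (hc i).le (sq_nonneg _)
    have hsum0 : ∑ e, c e * (a e - b e) ^ 2 = 0 :=
      le_antisymm hzero (Finset.sum_nonneg hterm)
    have := (Finset.sum_eq_zero_iff_of_nonneg hterm).mp hsum0 e (Finset.mem_univ e)
    have h2 : (a e - b e) ^ 2 = 0 := by
      rcases mul_eq_zero.mp this with h | h
      · exact absurd h (hc e).ne'
      · exact h
    have := pow_eq_zero_iff (n := 2) (by norm_num) |>.mp h2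
    linarith
  refine ⟨L₂ / L₁, div_pos hL₂pos hL₁pos, fun e => ?_⟩
  have := hab e
  rw [hadef, hbdef] at this
  simp only at this
  field_simp at this ⊢
  linarith [this]
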